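/- Let 0 < s < 1 and p ≥ 2 with ps > 1, p − 1 − ps < 0, and let W_{p,s} be as defined (the remainder potential on (0,1)). Then W_{p,s}(x) · (1−x)^{1+ps−p} converges to a positive finite limit as x → 1⁻. -/

import Mathlib

open MeasureTheory Set Filter
open scoped Topology

theorem stmt10 (p s : ℝ) (hs : 0 < s) (hs1 : s < 1) (hp : 2 ≤ p) (hps : 1 < p * s)
    (hcrit : p - 1 - p * s < 0) :
    let W : ℝ → ℝ := fun x =>
      2 * x ^ (-((p - 1) * (p * s - 1) / p)) *
        ∫ y in Ioi (1:ℝ),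
          (y ^ ((p * s - 1) / p) - x ^ ((p * s - 1) / p)) ^ (p - 1) *
            (y - x) ^ (-1 - p * s)
    ∃ L : ℝ, 0 < L ∧
      Tendsto (fun x => W x * (1 - x) ^ (1 + p * s - p))
        (nhdsWithin 1 (Iio (1:ℝ))) (nhds L) := by
  intro W
  have hp0 : (0:ℝ) < p := by linarith
  set a : ℝ := (p * s - 1) / p with ha_def
  have ha0 : 0 < a := div_pos (by linarith) hp0
  have ha1 : a < 1 := by
    rw [ha_def, div_lt_one hp0]
    nlinarith
  have he : 0 < 1 + p * s - p := by linarith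
  have hap : (0:ℝ) < a ^ (p - 1) := Real.rpow_pos_of_pos ha0 _
  -- the limit
  refine ⟨2 * (a ^ (p - 1) / (1 + p * s - p)), by positivity, ?_⟩
  set l : Filter ℝ := nhdsWithin 1 (Iio (1:ℝ)) with hl_def
  -- the substituted integrand
  set F : ℝ → ℝ → ℝ := fun x t =>
    (((x + (1 - x) * t) ^ a - x ^ a) / (1 - x)) ^ (p - 1) * t ^ (-1 - p * s) with hF_def
  set f : ℝ → ℝ := fun t => (a * t) ^ (p - 1) * t ^ (-1 - p * s) with hf_def
  have hev : ∀ᶠ x in l, x ∈ Ioo (1/2 : ℝ) 1 :=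
    Ioo_mem_nhdsLT_of_mem (by norm_num)
  -- value of the limit integral
  have hfval : ∫ t in Ioi (1:ℝ), f t = a ^ (p - 1) * (1 / (1 + p * s - p)) := by
    have hcongr : ∀ t ∈ Ioi (1:ℝ), f t = a ^ (p - 1) * t ^ (p - 2 - p * s) := by
      intro t ht
      have ht0 : (0:ℝ) < t := lt_trans one_pos ht
      show (a * t) ^ (p - 1) * t ^ (-1 - p * s) = _
      rw [Real.mul_rpow ha0.le ht0.le, mul_assoc, ← Real.rpow_add ht0]
      congr 2
      ring
    rw [setIntegral_congr_fun measurableSet_Ioi hcongr, MeasureTheory.integral_const_mul,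
      integral_Ioi_rpow_of_lt (by linarith) one_pos]
    rw [Real.one_rpow]
    congr 1
    rw [div_eq_div_iff (by linarith) (by linarith)]
    ring
  -- pointwise limit
  have hlim : ∀ t ∈ Ioi (1:ℝ), Tendsto (fun x => F x t) l (𝓝 (f t)) := by
    intro t ht
    have ht0 : (0:ℝ) < t := lt_trans one_pos ht
    -- slope limit
    have hslope : Tendsto (fun x => ((x + (1 - x) * t) ^ a - x ^ a) / (1 - x)) l (𝓝 (a * t)) := by
      set φ : ℝ → ℝ := fun h => (1 + (t - 1) * h) ^ a - (1 - h) ^ a with hφ_def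
      have d1 : HasDerivAt (fun h : ℝ => (1 + (t - 1) * h) ^ a) (a * (t - 1)) 0 := by
        have dbase : HasDerivAt (fun h : ℝ => 1 + (t - 1) * h) (t - 1) 0 := by
          simpa using ((hasDerivAt_id (0:ℝ)).const_mul (t - 1)).const_add 1
        have douter : HasDerivAt (fun u : ℝ => u ^ a) (a * (1:ℝ) ^ (a - 1)) 1 :=
          Real.hasDerivAt_rpow_const (Or.inl one_ne_zero)
        have douter' : HasDerivAt (fun u : ℝ => u ^ a) (a * (1:ℝ) ^ (a - 1))
            (1 + (t - 1) * 0) := by simpa using douter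
        have := douter'.comp 0 dbase
        simpa [Real.one_rpow, Function.comp_def] using this
      have d2 : HasDerivAt (fun h : ℝ => (1 - h) ^ a) (-a) 0 := by
        have dbase : HasDerivAt (fun h : ℝ => 1 - h) (-1 : ℝ) 0 := by
          simpa using (hasDerivAt_id (0:ℝ)).const_sub 1
        have douter' : HasDerivAt (fun u : ℝ => u ^ a) (a * (1:ℝ) ^ (a - 1))
            (1 - (0:ℝ)) := by
          simpa using (Real.hasDerivAt_rpow_const (x := (1:ℝ)) (p := a) (Or.inl one_ne_zero))
        have := douter'.comp 0 dbase
        simpa [Real.one_rpow, Function.comp_def] using this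
      have hd : HasDerivAt φ (a * t) 0 := by
        have := d1.sub d2
        have h' : a * (t - 1) - -a = a * t := by ring
        rwa [h'] at this
      have hsl := hasDerivAt_iff_tendsto_slope.mp hd
      have hmap : Tendsto (fun x : ℝ => 1 - x) l (nhdsWithin 0 {(0:ℝ)}ᶜ) := by
        apply tendsto_nhdsWithin_of_tendsto_nhds_of_eventually_within
        · have : Tendsto (fun x : ℝ => 1 - x) (𝓝 1) (𝓝 (1 - 1)) :=
            (continuous_const.sub continuous_id).tendsto 1
          simpa using this.mono_left nhdsWithin_le_nhds
        · filter_upwards [self_mem_nhdsWithin] with x hx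
          have : (0:ℝ) < 1 - x := by simp at hx; linarith
          simp [this.ne']
      have hcomp := hsl.comp hmap
      refine hcomp.congr' ?_
      filter_upwards [self_mem_nhdsWithin] with x hx
      have hx1 : x < 1 := hx
      have hc0 : (0:ℝ) < 1 - x := by linarith
      show slope φ 0 (1 - x) = _
      rw [slope_def_field]
      have hφ0 : φ 0 = 0 := by simp [hφ_def]
      have harg : 1 + (t - 1) * (1 - x) = x + (1 - x) * t := by ring
      have harg2 : 1 - (1 - x) = x := by ring
      rw [hφ0, hφ_def]
      simp only [harg, harg2, sub_zero]
    have hcont : ContinuousAt (fun u : ℝ => u ^ (p - 1)) (a * t) :=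
      Real.continuousAt_rpow_const _ _ (Or.inl (mul_pos ha0 ht0).ne')
    have := (hcont.tendsto.comp hslope).mul_const (t ^ (-1 - p * s))
    exact this
  -- the uniform bound
  have hbound : ∀ x ∈ Ioo (1/2 : ℝ) 1, ∀ t ∈ Ioi (1:ℝ),
      ‖F x t‖ ≤ (2 * a * t) ^ (p - 1) * t ^ (-1 - p * s) := by
    intro x hx t ht
    have hx0 : (0:ℝ) < x := by have := hx.1; linarith
    have hx1 : x < 1 := hx.2
    have hc0 : (0:ℝ) < 1 - x := by linarith
    have ht0 : (0:ℝ) < t := lt_trans one_pos ht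
    have hct0 : (0:ℝ) < (1 - x) * t := mul_pos hc0 ht0
    have hA0 : 0 ≤ (x + (1 - x) * t) ^ a - x ^ a := by
      have : x ≤ x + (1 - x) * t := by linarith
      exact sub_nonneg.2 (Real.rpow_le_rpow hx0.le this ha0.le)
    have hup : x + (1 - x) * t = x * (1 + (1 - x) * t / x) := by
      field_simp
    have hz0 : 0 ≤ (1 - x) * t / x := div_nonneg hct0.le hx0.le
    have hbern : (1 + (1 - x) * t / x) ^ a ≤ 1 + a * ((1 - x) * t / x) :=
      rpow_one_add_le_one_add_mul_self (by linarith) ha0.le ha1.le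
    have hxa1 : x ^ (a - 1) ≤ 2 := by
      calc x ^ (a - 1) ≤ x ^ (-1 : ℝ) :=
            Real.rpow_le_rpow_of_exponent_ge hx0 hx1.le (by linarith)
        _ = x⁻¹ := Real.rpow_neg_one x
        _ ≤ 2 := by
            rw [inv_le_comm₀ hx0 two_pos]
            linarith [hx.1]
    have hAB : (x + (1 - x) * t) ^ a - x ^ a ≤ 2 * a * t * (1 - x) := by
      have h1 : (x + (1 - x) * t) ^ a ≤ x ^ a * (1 + a * ((1 - x) * t / x)) := by
        rw [hup, Real.mul_rpow hx0.le (by linarith)]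
        exact mul_le_mul_of_nonneg_left hbern (Real.rpow_nonneg hx0.le _)
      have h2 : x ^ a * (1 + a * ((1 - x) * t / x)) = x ^ a + a * (x ^ (a - 1) * ((1 - x) * t)) := by
        rw [Real.rpow_sub_one hx0.ne']
        field_simp
      have h3 : a * (x ^ (a - 1) * ((1 - x) * t)) ≤ a * (2 * ((1 - x) * t)) :=
        mul_le_mul_of_nonneg_left (mul_le_mul_of_nonneg_right hxa1 hct0.le) ha0.le
      nlinarith [h1, h2, h3]
    have hq : ((x + (1 - x) * t) ^ a - x ^ a) / (1 - x) ≤ 2 * a * t := by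
      rw [div_le_iff₀ hc0]
      linarith
    have hq0 : 0 ≤ ((x + (1 - x) * t) ^ a - x ^ a) / (1 - x) := div_nonneg hA0 hc0.le
    have hFnn : 0 ≤ F x t :=
      mul_nonneg (Real.rpow_nonneg hq0 _) (Real.rpow_nonneg ht0.le _)
    rw [Real.norm_of_nonneg hFnn]
    exact mul_le_mul_of_nonneg_right
      (Real.rpow_le_rpow hq0 hq (by linarith)) (Real.rpow_nonneg ht0.le _)
  -- integrability of the bound
  have hbound_int : Integrable (fun t => (2 * a * t) ^ (p - 1) * t ^ (-1 - p * s))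
      (volume.restrict (Ioi (1:ℝ))) := by
    have base : IntegrableOn (fun t : ℝ => (2 * a) ^ (p - 1) * t ^ (p - 2 - p * s))
        (Ioi (1:ℝ)) :=
      (integrableOn_Ioi_rpow_of_lt (by linarith) one_pos).const_mul _
    refine base.congr_fun ?_ measurableSet_Ioi
    intro t ht
    have ht0 : (0:ℝ) < t := lt_trans one_pos ht
    show (2 * a) ^ (p - 1) * t ^ (p - 2 - p * s) = (2 * a * t) ^ (p - 1) * t ^ (-1 - p * s)
    rw [Real.mul_rpow (by positivity) ht0.le, mul_assoc, ← Real.rpow_add ht0]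
    congr 2
    ring
  -- measurability
  have hmeas : ∀ x : ℝ, AEStronglyMeasurable (F x) (volume.restrict (Ioi (1:ℝ))) := by
    intro x
    rw [hF_def]
    apply Measurable.aestronglyMeasurable
    fun_prop
  -- dominated convergence
  have hI : Tendsto (fun x => ∫ t in Ioi (1:ℝ), F x t) l
      (𝓝 (∫ t in Ioi (1:ℝ), f t)) := by
    refine tendsto_integral_filter_of_dominated_convergence _
      (Eventually.of_forall fun x => hmeas x) ?_ hbound_int ?_
    · filter_upwards [hev] with x hx
      exact (ae_restrict_iff' measurableSet_Ioi).2 (ae_of_all _ fun t ht => hbound x hx t ht)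
    · exact (ae_restrict_iff' measurableSet_Ioi).2 (ae_of_all _ fun t ht => hlim t ht)
  -- change of variables: eventual equality
  have heq : ∀ᶠ x in l,
      (∫ y in Ioi (1:ℝ), (y ^ a - x ^ a) ^ (p - 1) * (y - x) ^ (-1 - p * s)) *
        (1 - x) ^ (1 + p * s - p) = ∫ t in Ioi (1:ℝ), F x t := by
    filter_upwards [hev] with x hx
    have hx0 : (0:ℝ) < x := by have := hx.1; linarith
    have hx1 : x < 1 := hx.2
    have hc0 : (0:ℝ) < 1 - x := by linarith
    set g : ℝ → ℝ := fun y => (y ^ a - x ^ a) ^ (p - 1) * (y - x) ^ (-1 - p * s) with hg_def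
    -- translation
    have htrans : ∫ u in Ioi (1 - x), g (u + x) = ∫ y in Ioi (1:ℝ), g y := by
      have hmp := measurePreserving_add_right (volume : Measure ℝ) x
      have hme : MeasurableEmbedding (fun u : ℝ => u + x) :=
        (MeasurableEquiv.addRight x).measurableEmbedding
      have := hmp.setIntegral_preimage_emb hme g (Ioi 1)
      rwa [show (fun u : ℝ => u + x) ⁻¹' Ioi 1 = Ioi (1 - x) by
        ext u; simp [lt_sub_iff_add_lt]] at this
    -- scaling
    have hscale : (∫ t in Ioi (1:ℝ), g ((1 - x) * t + x)) =
        (1 - x)⁻¹ • ∫ u in Ioi ((1 - x) * 1), g (u + x) :=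
      integral_comp_mul_left_Ioi (fun u => g (u + x)) 1 hc0
    -- pointwise relation F x t = (1-x)^(2+p*s-p) * g((1-x)*t+x)
    have hpt : ∀ t ∈ Ioi (1:ℝ),
        F x t = (1 - x) ^ (2 + p * s - p) * g ((1 - x) * t + x) := by
      intro t ht
      have ht0 : (0:ℝ) < t := lt_trans one_pos ht
      have hA0 : 0 ≤ (x + (1 - x) * t) ^ a - x ^ a := by
        have : x ≤ x + (1 - x) * t := by nlinarith
        exact sub_nonneg.2 (Real.rpow_le_rpow hx0.le this ha0.le)
      have hbase : (1 - x) * t + x - x = (1 - x) * t := by ring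
      have hbase2 : (1 - x) * t + x = x + (1 - x) * t := by ring
      have hbase3 : x + (1 - x) * t - x = (1 - x) * t := by ring
      rw [hg_def]
      simp only [hbase, hbase2, hbase3]
      rw [Real.mul_rpow hc0.le ht0.le]
      rw [hF_def]
      simp only
      rw [Real.div_rpow hA0 hc0.le]
      have hcp : ((1 - x) ^ (p - 1))⁻¹ =
          (1 - x) ^ (2 + p * s - p) * (1 - x) ^ (-1 - p * s) := by
        rw [← Real.rpow_add hc0, ← Real.rpow_neg hc0.le]
        congr 1
        ring
      rw [div_eq_mul_inv, hcp]
      ring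
    have hF_int_eq : (∫ t in Ioi (1:ℝ), F x t) =
        (1 - x) ^ (2 + p * s - p) * ∫ t in Ioi (1:ℝ), g ((1 - x) * t + x) := by
      rw [setIntegral_congr_fun measurableSet_Ioi hpt, MeasureTheory.integral_const_mul]
    rw [hF_int_eq, hscale, mul_one, htrans, smul_eq_mul]
    rw [← mul_assoc, mul_comm ((1 - x) ^ (2 + p * s - p)) ((1 - x)⁻¹)]
    rw [← Real.rpow_neg_one (1 - x), ← Real.rpow_add hc0]
    rw [show (-1 : ℝ) + (2 + p * s - p) = 1 + p * s - p by ring]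
    ring
  -- combine
  have hI' : Tendsto (fun x =>
      (∫ y in Ioi (1:ℝ), (y ^ a - x ^ a) ^ (p - 1) * (y - x) ^ (-1 - p * s)) *
        (1 - x) ^ (1 + p * s - p)) l (𝓝 (a ^ (p - 1) * (1 / (1 + p * s - p)))) := by
    rw [← hfval]
    exact hI.congr' (heq.mono fun x hx => hx.symm)
  have h2 : Tendsto (fun x : ℝ => 2 * x ^ (-((p - 1) * (p * s - 1) / p))) l (𝓝 2) := by
    have hcont : ContinuousAt (fun x : ℝ => x ^ (-((p - 1) * (p * s - 1) / p))) 1 :=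
      Real.continuousAt_rpow_const _ _ (Or.inl one_ne_zero)
    have := (hcont.tendsto.mono_left (nhdsWithin_le_nhds : l ≤ 𝓝 1)).const_mul (2:ℝ)
    simpa [Real.one_rpow] using this
  have hfinal := h2.mul hI'
  have hval : 2 * (a ^ (p - 1) * (1 / (1 + p * s - p))) =
      2 * (a ^ (p - 1) / (1 + p * s - p)) := by ring
  rw [hval] at hfinal
  refine hfinal.congr fun x => ?_
  show 2 * x ^ (-((p - 1) * (p * s - 1) / p)) *
      ((∫ y in Ioi (1:ℝ), (y ^ a - x ^ a) ^ (p - 1) * (y - x) ^ (-1 - p * s)) *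
        (1 - x) ^ (1 + p * s - p)) = W x * (1 - x) ^ (1 + p * s - p)
  rw [hl_def] at *
  show _ = 2 * x ^ (-((p - 1) * (p * s - 1) / p)) *
      (∫ y in Ioi (1:ℝ), (y ^ a - x ^ a) ^ (p - 1) * (y - x) ^ (-1 - p * s)) *
        (1 - x) ^ (1 + p * s - p)
  ring
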